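/- Let K₁ and K₂ be distinct Galois number fields of odd prime degrees whose Hilbert class fields H(K₁) and H(K₂) are abelian over ℚ. If the compositum K₁K₂ is ramified over Kᵢ, then H(Kᵢ) ∩ K₁K₂ = Kᵢ. -/

import Mathlib

open NumberField IntermediateField Module
open scoped nonZeroDivisors

set_option maxHeartbeats 1000000
set_option maxHeartbeats 8000000
set_option synthInstance.maxHeartbeats 400000

noncomputable section

/-- A fixed algebraic closure of ℚ in which all our number fields live. -/
abbrev Qbar : Type := AlgebraicClosure ℚ

/-- The cyclotomic field ℚ(ζ_n) inside `Qbar`, obtained by adjoining all n-th roots of unity. -/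
def cyclo (n : ℕ) : IntermediateField ℚ Qbar :=
  IntermediateField.adjoin ℚ {x : Qbar | x ^ n = 1}

/-- The inclusion `K →+* L` for `K ≤ L`. -/
def incl {K L : IntermediateField ℚ Qbar} (h : K ≤ L) : ↥K →+* ↥L :=
  (IntermediateField.inclusion h).toRingHom

/-- The induced map on rings of integers. -/
def oIncl {K L : IntermediateField ℚ Qbar} (h : K ≤ L) : 𝓞 ↥K →+* 𝓞 ↥L :=
  RingOfIntegers.mapRingHom (incl h)

/-- The extension `L/K` is unramified at all finite primes of `K`. -/
def UnramifiedAtFinitePrimes {K L : IntermediateField ℚ Qbar} (h : K ≤ L) : Prop :=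
  ∀ (p : Ideal (𝓞 ↥K)) (P : Ideal (𝓞 ↥L)), p.IsPrime → P.IsPrime → p ≠ ⊥ →
    Ideal.comap (oIncl h) P = p → sSup {n : ℕ | Ideal.map (oIncl h) p ≤ P ^ n} = 1

/-- The extension `L/K` is unramified at all infinite places of `K`:
no real place of `K` lies below a complex place of `L`. -/
def UnramifiedAtInfinitePlaces' {K L : IntermediateField ℚ Qbar} (h : K ≤ L) : Prop :=
  ∀ w : InfinitePlace ↥L, (w.comap (incl h)).IsReal → w.IsReal

/-- The extension `L/K` is unramified at all places of `K`. -/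
def UnramifiedAtAllPlaces {K L : IntermediateField ℚ Qbar} (h : K ≤ L) : Prop :=
  UnramifiedAtFinitePrimes h ∧ UnramifiedAtInfinitePlaces' h

/-- The extension `L/K` is ramified: some place of `K` ramifies in `L`. -/
def IsRamifiedExt {K L : IntermediateField ℚ Qbar} (h : K ≤ L) : Prop :=
  ¬ UnramifiedAtAllPlaces h

/-- `L/K` is an abelian extension. -/
def IsAbelianOver {K L : IntermediateField ℚ Qbar} (h : K ≤ L) : Prop :=
  IsGalois ↥K ↥(IntermediateField.extendScalars h) ∧
    ∀ σ τ : ↥(IntermediateField.extendScalars h) ≃ₐ[↥K] ↥(IntermediateField.extendScalars h),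
      σ * τ = τ * σ

/-- `L/K` is a cyclic extension. -/
def IsCyclicOver {K L : IntermediateField ℚ Qbar} (h : K ≤ L) : Prop :=
  IsGalois ↥K ↥(IntermediateField.extendScalars h) ∧
    IsCyclic (↥(IntermediateField.extendScalars h) ≃ₐ[↥K] ↥(IntermediateField.extendScalars h))

/-- `H` is abelian over ℚ. -/
def IsAbelianOverRat (H : IntermediateField ℚ Qbar) : Prop :=
  IsGalois ℚ ↥H ∧ ∀ σ τ : ↥H ≃ₐ[ℚ] ↥H, σ * τ = τ * σ

/-- `H/K` is an abelian extension unramified at all places of `K`. -/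
def IsUnramifiedAbelianExt (K H : IntermediateField ℚ Qbar) : Prop :=
  ∃ h : K ≤ H, IsAbelianOver h ∧ UnramifiedAtAllPlaces h

/-- `H` is the Hilbert class field of `K`: the maximal abelian extension of `K`
unramified at all places of `K`. -/
def IsHilbertClassField (K H : IntermediateField ℚ Qbar) : Prop :=
  IsUnramifiedAbelianExt K H ∧ ∀ H', IsUnramifiedAbelianExt K H' → H' ≤ H

/-- `H/K` is an extension which is abelian over ℚ and unramified at all finite primes of `K`. -/
def IsGenusExt (K H : IntermediateField ℚ Qbar) : Prop :=
  ∃ h : K ≤ H, IsAbelianOverRat H ∧ UnramifiedAtFinitePrimes h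

/-- `G` is the genus field of `K`: the maximal extension of `K` abelian over ℚ and
unramified at all finite primes of `K`. -/
def IsGenusField (K G : IntermediateField ℚ Qbar) : Prop :=
  IsGenusExt K G ∧ ∀ H, IsGenusExt K H → H ≤ G

/-- `f` is the conductor of `K`: the least positive integer `n` with `K ⊆ ℚ(ζ_n)`. -/
def IsConductor (K : IntermediateField ℚ Qbar) (f : ℕ) : Prop :=
  0 < f ∧ K ≤ cyclo f ∧ ∀ m : ℕ, 0 < m → K ≤ cyclo m → f ≤ m

/-- The automorphism `σ` of `ℚ(ζ_f)` fixes the subfield `L` pointwise, i.e. `σ ∈ Gal(ℚ(ζ_f)/L)`. -/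
def FixesPointwise {F : IntermediateField ℚ Qbar} (σ : ↥F ≃ₐ[ℚ] ↥F)
    (L : IntermediateField ℚ Qbar) : Prop :=
  ∀ x : ↥F, (x : Qbar) ∈ L → σ x = x

/-- The automorphism `σ` of `ℚ(ζ_f)` corresponds to the residue class `d mod f`, i.e. acts as
`ζ ↦ ζ^d` on `f`-th roots of unity. -/
def ActsAsPow (f d : ℕ) (σ : ↥(cyclo f) ≃ₐ[ℚ] ↥(cyclo f)) : Prop :=
  ∀ x : ↥(cyclo f), (x : Qbar) ^ f = 1 → (σ x : Qbar) = (x : Qbar) ^ d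

/-- The rational prime `p` splits completely in `L`: every prime of `𝓞 L` above `p`
has ramification index `1` and inertia degree `1` (i.e. absolute norm `p`). -/
def SplitsCompletelyIn (p : ℕ) (L : IntermediateField ℚ Qbar) [NumberField ↥L] : Prop :=
  ∀ P : Ideal (𝓞 ↥L), P.IsPrime →
    Ideal.comap (algebraMap ℤ (𝓞 ↥L)) P = Ideal.span {(p : ℤ)} →
    sSup {n : ℕ | Ideal.map (algebraMap ℤ (𝓞 ↥L)) (Ideal.span {(p : ℤ)}) ≤ P ^ n} = 1 ∧
      Ideal.absNorm P = p

/-- A nonzero ideal `a` of `𝓞 K` is Euclidean for the function `ψ` (Lenstra): for every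
nonzero ideal `b` and every `x ∈ b⁻¹a \ a` there is `y ∈ a` with `ψ(a⁻¹b(x-y)) < ψ(b)`. -/
def IsEuclideanFor {K : Type} [Field K] [NumberField K] {W : Type} [LinearOrder W]
    (ψ : Ideal (𝓞 K) → W) (a : Ideal (𝓞 K)) : Prop :=
  a ≠ 0 ∧ ∀ b : Ideal (𝓞 K), b ≠ 0 → ∀ x : K,
    x ∈ ((b : FractionalIdeal (𝓞 K)⁰ K)⁻¹ * (a : FractionalIdeal (𝓞 K)⁰ K)) →
    x ∉ (a : FractionalIdeal (𝓞 K)⁰ K) →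
    ∃ y ∈ (a : FractionalIdeal (𝓞 K)⁰ K), ∃ c : Ideal (𝓞 K),
      (c : FractionalIdeal (𝓞 K)⁰ K) =
        (a : FractionalIdeal (𝓞 K)⁰ K)⁻¹ * (b : FractionalIdeal (𝓞 K)⁰ K) *
          FractionalIdeal.spanSingleton (𝓞 K)⁰ (x - y) ∧
      ψ c < ψ b

/-- The ideal class `C` is a Euclidean ideal class: some integral ideal in the class `C` is
Euclidean for some function `ψ` into a well-ordered set. -/
def IsEuclideanIdealClass {K : Type} [Field K] [NumberField K] (C : ClassGroup (𝓞 K)) : Prop :=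
  ∃ (a : Ideal (𝓞 K)) (ha : a ∈ (Ideal (𝓞 K))⁰), ClassGroup.mk0 ⟨a, ha⟩ = C ∧
    ∃ (W : Type) (_ : LinearOrder W) (_ : WellFoundedLT W) (ψ : Ideal (𝓞 K) → W),
      IsEuclideanFor ψ a

/-- The number field `K` has a Euclidean ideal class. -/
def HasEuclideanIdealClass (K : Type) [Field K] [NumberField K] : Prop :=
  ∃ C : ClassGroup (𝓞 K), IsEuclideanIdealClass C

/-- `t` is the reduction of the field element `a` modulo the prime ideal `𝔭`:
`a = r/s` with `r, s` integral, `s ∉ 𝔭`, and `t·s̄ = r̄` in `𝓞 K / 𝔭`. -/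
def ReducesTo {K : Type} [Field K] [NumberField K] (a : K) (𝔭 : Ideal (𝓞 K))
    (t : 𝓞 K ⧸ 𝔭) : Prop :=
  ∃ r s : 𝓞 K, s ∉ 𝔭 ∧ (algebraMap (𝓞 K) K s) * a = algebraMap (𝓞 K) K r ∧
    Ideal.Quotient.mk 𝔭 r = t * Ideal.Quotient.mk 𝔭 s

/-- `a ∈ K^×` is a primitive root modulo `𝔭`: its reduction generates `(𝓞 K / 𝔭)^×`. -/
def IsPrimitiveRootMod {K : Type} [Field K] [NumberField K] (a : K)
    (𝔭 : Ideal (𝓞 K)) : Prop :=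
  ∃ t : 𝓞 K ⧸ 𝔭, ReducesTo a 𝔭 t ∧ ∀ z : 𝓞 K ⧸ 𝔭, z ≠ 0 → ∃ n : ℕ, t ^ n = z

/-- `a ∈ K^×` is a quadratic non-residue modulo `𝔭`: its reduction is not a square. -/
def IsQuadNonResidueMod {K : Type} [Field K] [NumberField K] (a : K)
    (𝔭 : Ideal (𝓞 K)) : Prop :=
  ∃ t : 𝓞 K ⧸ 𝔭, ReducesTo a 𝔭 t ∧ ∀ z : 𝓞 K ⧸ 𝔭, z ^ 2 ≠ t

end

section AuxiliaryLemmas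

lemma incl_comp {K L H : IntermediateField ℚ Qbar} (h1 : K ≤ L) (h2 : L ≤ H) :
    incl (h1.trans h2) = (incl h2).comp (incl h1) := rfl

lemma oIncl_comp {K L H : IntermediateField ℚ Qbar} (h1 : K ≤ L) (h2 : L ≤ H) :
    oIncl (h1.trans h2) = (oIncl h2).comp (oIncl h1) := rfl

lemma oIncl_injective {K L : IntermediateField ℚ Qbar} (h : K ≤ L) :
    Function.Injective (oIncl h) := fun a b hab => by
  have : (incl h) a.1 = (incl h) b.1 := congrArg RingOfIntegers.val hab
  exact RingOfIntegers.ext ((incl h).injective this)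

lemma map_le_pow_two_of_ne_one {R S : Type*} [CommRing R] [CommRing S] {f : R →+* S}
    {p : Ideal R} {P : Ideal S} (hle : Ideal.map f p ≤ P)
    (hne : sSup {n : ℕ | Ideal.map f p ≤ P ^ n} ≠ 1) : Ideal.map f p ≤ P ^ 2 := by
  have h1 : (1 : ℕ) ∈ {n | Ideal.map f p ≤ P ^ n} := by simpa using hle
  by_cases hb : BddAbove {n | Ideal.map f p ≤ P ^ n}
  · have hmem := Nat.sSup_mem ⟨1, h1⟩ hb
    have hge : 1 ≤ sSup {n | Ideal.map f p ≤ P ^ n} := le_csSup hb h1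
    have h2 : 2 ≤ sSup {n | Ideal.map f p ≤ P ^ n} := by
      rcases Nat.lt_or_ge (sSup {n | Ideal.map f p ≤ P ^ n}) 2 with hlt | hge2
      · exact absurd (by omega : sSup {n | Ideal.map f p ≤ P ^ n} = 1) hne
      · exact hge2
    exact le_trans hmem (Ideal.pow_le_pow_right h2)
  · obtain ⟨k, hk, hk2⟩ := not_bddAbove_iff.mp hb 1
    exact le_trans hk (Ideal.pow_le_pow_right hk2)

lemma ramificationIdx_ne_one_of_le_pow_two {R S : Type*} [CommRing R] [CommRing S] {f : R →+* S}
    {p : Ideal R} {P : Ideal S} (h2 : Ideal.map f p ≤ P ^ 2) :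
    sSup {n : ℕ | Ideal.map f p ≤ P ^ n} ≠ 1 := by
  intro h1
  by_cases hb : BddAbove {n | Ideal.map f p ≤ P ^ n}
  · have := le_csSup hb (show (2:ℕ) ∈ {n | Ideal.map f p ≤ P ^ n} from h2)
    rw [h1] at this
    omega
  · have h0 : sSup {n : ℕ | Ideal.map f p ≤ P ^ n} = 0 := by
      show sSup {n | Ideal.map f p ≤ P ^ n} = 0
      rw [csSup_of_not_bddAbove hb, csSup_empty]; rfl
    omega

lemma descend_finite {K L H : IntermediateField ℚ Qbar} (h1 : K ≤ L) (h2 : L ≤ H)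
    (hu : UnramifiedAtFinitePrimes (h1.trans h2)) : UnramifiedAtFinitePrimes h1 := by
  intro p P hp hP hp0 hcomap
  by_contra hne1
  have hle : Ideal.map (oIncl h1) p ≤ P := hcomap ▸ Ideal.map_comap_le
  have hP2 : Ideal.map (oIncl h1) p ≤ P ^ 2 := map_le_pow_two_of_ne_one hle hne1
  letI : Algebra (𝓞 ↥L) (𝓞 ↥H) := (oIncl h2).toAlgebra
  haveI : IsScalarTower ℤ (𝓞 ↥L) (𝓞 ↥H) :=
    IsScalarTower.of_algebraMap_eq' (Subsingleton.elim _ _)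
  haveI : Algebra.IsIntegral (𝓞 ↥L) (𝓞 ↥H) := by
    haveI : Algebra.IsIntegral ℤ (𝓞 ↥H) := inferInstance
    exact Algebra.IsIntegral.tower_top ℤ
  have hPne : P ≠ ⊥ := by
    rintro rfl
    exact hp0 (by rw [← hcomap, Ideal.comap_bot_of_injective _ (oIncl_injective h1)])
  obtain ⟨Q, -, hQprime, hQcomap⟩ :=
    Ideal.exists_ideal_over_prime_of_isIntegral P ⊥
      (by rw [show algebraMap (𝓞 ↥L) (𝓞 ↥H) = oIncl h2 from rfl,
            Ideal.comap_bot_of_injective _ (oIncl_injective h2)]; exact bot_le)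
  have halg : algebraMap (𝓞 ↥L) (𝓞 ↥H) = oIncl h2 := rfl
  rw [halg] at hQcomap
  have hcomap' : Ideal.comap (oIncl (h1.trans h2)) Q = p := by
    rw [oIncl_comp h1 h2, ← Ideal.comap_comap, hQcomap, hcomap]
  have hQ2 : Ideal.map (oIncl (h1.trans h2)) p ≤ Q ^ 2 := by
    rw [oIncl_comp h1 h2, ← Ideal.map_map]
    calc Ideal.map (oIncl h2) (Ideal.map (oIncl h1) p)
        ≤ Ideal.map (oIncl h2) (P ^ 2) := Ideal.map_mono hP2
      _ = (Ideal.map (oIncl h2) P) ^ 2 := Ideal.map_pow _ _ _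
      _ ≤ Q ^ 2 := by
          rw [pow_two, pow_two]
          exact Ideal.mul_mono (hQcomap ▸ Ideal.map_comap_le) (hQcomap ▸ Ideal.map_comap_le)
  exact ramificationIdx_ne_one_of_le_pow_two hQ2 (hu p Q hp hQprime hp0 hcomap')

lemma descend_infinite {K L H : IntermediateField ℚ Qbar} (h1 : K ≤ L) (h2 : L ≤ H)
    (hu : UnramifiedAtInfinitePlaces' (h1.trans h2)) : UnramifiedAtInfinitePlaces' h1 := by
  intro w hw
  letI : Algebra ↥L ↥H := (incl h2).toAlgebra
  haveI : IsScalarTower ℚ ↥L ↥H := IsScalarTower.of_algebraMap_eq' (Subsingleton.elim _ _)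
  haveI : Algebra.IsAlgebraic ℚ ↥H := by
    haveI : Algebra.IsAlgebraic ℚ Qbar := AlgebraicClosure.isAlgebraic ℚ
    exact IntermediateField.isAlgebraic_tower_bot (K := ℚ) (L := Qbar) (S := H)
  haveI : Algebra.IsAlgebraic ↥L ↥H := Algebra.IsAlgebraic.tower_top (K := ℚ) ↥L
  obtain ⟨w', rfl⟩ := NumberField.InfinitePlace.comap_surjective (k := ↥L) (K := ↥H) w
  have halg : algebraMap ↥L ↥H = incl h2 := rfl
  rw [halg] at hw ⊢
  have hreal : (w'.comap (incl (h1.trans h2))).IsReal := by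
    rw [show incl (h1.trans h2) = (incl h2).comp (incl h1) from rfl,
      NumberField.InfinitePlace.comap_comp]
    exact hw
  exact (hu w' hreal).comap _

lemma sup_fieldRange_eq_top (K K' : IntermediateField ℚ Qbar) :
    (IntermediateField.inclusion (le_sup_left : K ≤ K ⊔ K')).fieldRange ⊔
      (IntermediateField.inclusion (le_sup_right : K' ≤ K ⊔ K')).fieldRange = ⊤ := by
  apply IntermediateField.map_injective (K ⊔ K').val
  rw [IntermediateField.map_sup, AlgHom.map_fieldRange, AlgHom.map_fieldRange,
    ← AlgHom.fieldRange_eq_map, IntermediateField.fieldRange_val]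
  have e1 : (K ⊔ K').val.comp (IntermediateField.inclusion (le_sup_left : K ≤ K ⊔ K')) = K.val :=
    by ext x; rfl
  have e2 : (K ⊔ K').val.comp (IntermediateField.inclusion (le_sup_right : K' ≤ K ⊔ K')) = K'.val :=
    by ext x; rfl
  rw [e1, e2, IntermediateField.fieldRange_val, IntermediateField.fieldRange_val]

lemma finrank_sup_dvd (K K' : IntermediateField ℚ Qbar)
    [NumberField ↥K] [NumberField ↥K'] (hgal : IsGalois ℚ ↥K) (hgal' : IsGalois ℚ ↥K') :
    finrank ℚ ↥(K ⊔ K') ∣ finrank ℚ ↥K * finrank ℚ ↥K' := by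
  haveI := hgal; haveI := hgal'
  haveI : FiniteDimensional ℚ ↥(K ⊔ K') := IntermediateField.finiteDimensional_sup K K'
  haveI : Normal ℚ ↥(K ⊔ K') := by
    exact @IntermediateField.normal_sup _ _ _ _ _ K K' hgal.to_normal hgal'.to_normal
  haveI : IsGalois ℚ ↥(K ⊔ K') := ⟨⟩
  letI : Algebra ↥K ↥(K ⊔ K') := (incl (le_sup_left : K ≤ K ⊔ K')).toAlgebra
  letI : Algebra ↥K' ↥(K ⊔ K') := (incl (le_sup_right : K' ≤ K ⊔ K')).toAlgebra
  haveI : IsScalarTower ℚ ↥K ↥(K ⊔ K') := IsScalarTower.of_algebraMap_eq' (Subsingleton.elim _ _)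
  haveI : IsScalarTower ℚ ↥K' ↥(K ⊔ K') := IsScalarTower.of_algebraMap_eq' (Subsingleton.elim _ _)
  let φ : (↥(K ⊔ K') ≃ₐ[ℚ] ↥(K ⊔ K')) →* (↥K ≃ₐ[ℚ] ↥K) × (↥K' ≃ₐ[ℚ] ↥K') :=
    MonoidHom.prod (AlgEquiv.restrictNormalHom ↥K) (AlgEquiv.restrictNormalHom ↥K')
  have hinj : Function.Injective φ := by
    rw [injective_iff_map_eq_one]
    intro σ hσ
    have hσ1 : AlgEquiv.restrictNormalHom (F := ℚ) (K₁ := ↥(K ⊔ K')) ↥K σ = 1 :=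
      congrArg Prod.fst hσ
    have hσ2 : AlgEquiv.restrictNormalHom (F := ℚ) (K₁ := ↥(K ⊔ K')) ↥K' σ = 1 :=
      congrArg Prod.snd hσ
    have hfix1 : σ ∈ IntermediateField.fixingSubgroup
        (IntermediateField.inclusion (le_sup_left : K ≤ K ⊔ K')).fieldRange := by
      refine (IntermediateField.mem_fixingSubgroup_iff _ _).mpr ?_
      rintro y ⟨x, rfl⟩
      have hc := AlgEquiv.restrictNormal_commutes σ ↥K x
      rw [show σ.restrictNormal ↥K
          = AlgEquiv.restrictNormalHom (F := ℚ) (K₁ := ↥(K ⊔ K')) ↥K σ from rfl, hσ1] at hc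
      have h' : σ ((algebraMap ↥K ↥(K ⊔ K')) x) = (algebraMap ↥K ↥(K ⊔ K')) x := by
        simpa using hc.symm
      exact h'
    have hfix2 : σ ∈ IntermediateField.fixingSubgroup
        (IntermediateField.inclusion (le_sup_right : K' ≤ K ⊔ K')).fieldRange := by
      refine (IntermediateField.mem_fixingSubgroup_iff _ _).mpr ?_
      rintro y ⟨x, rfl⟩
      have hc := AlgEquiv.restrictNormal_commutes σ ↥K' x
      rw [show σ.restrictNormal ↥K'
          = AlgEquiv.restrictNormalHom (F := ℚ) (K₁ := ↥(K ⊔ K')) ↥K' σ from rfl, hσ2] at hc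
      have h' : σ ((algebraMap ↥K' ↥(K ⊔ K')) x) = (algebraMap ↥K' ↥(K ⊔ K')) x := by
        simpa using hc.symm
      exact h'
    have htop : (⊤ : IntermediateField ℚ ↥(K ⊔ K')) ≤
        IntermediateField.fixedField (Subgroup.zpowers σ) := by
      refine le_trans (le_of_eq (sup_fieldRange_eq_top K K').symm) ?_
      exact sup_le
        ((IntermediateField.le_iff_le _ _).mpr ((Subgroup.zpowers_le).mpr hfix1))
        ((IntermediateField.le_iff_le _ _).mpr ((Subgroup.zpowers_le).mpr hfix2))
    ext x
    exact congrArg Subtype.val (htop (IntermediateField.mem_top (x := x))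
      ⟨σ, Subgroup.mem_zpowers σ⟩)
  have hdvd := Subgroup.card_dvd_of_injective φ hinj
  rwa [Nat.card_prod,
    IsGalois.card_aut_eq_finrank, IsGalois.card_aut_eq_finrank, IsGalois.card_aut_eq_finrank]
    at hdvd

lemma key_lemma (K K' H : IntermediateField ℚ Qbar) [NumberField ↥K] [NumberField ↥K']
    (hgal : IsGalois ℚ ↥K) (hgal' : IsGalois ℚ ↥K')
    (hq : (finrank ℚ ↥K').Prime)
    (hH : IsHilbertClassField K H)
    (L : IntermediateField ℚ Qbar) (hL : L = K ⊔ K')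
    (h : K ≤ L) (hram : IsRamifiedExt h) : H ⊓ L = K := by
  subst hL
  obtain ⟨hKH, -, huH⟩ := hH.1
  haveI : FiniteDimensional ℚ ↥(K ⊔ K') := IntermediateField.finiteDimensional_sup K K'
  have hKM : K ≤ H ⊓ (K ⊔ K') := le_inf hKH h
  have hML : H ⊓ (K ⊔ K') ≤ K ⊔ K' := inf_le_right
  haveI : FiniteDimensional ℚ ↥(H ⊓ (K ⊔ K')) :=
    FiniteDimensional.of_injective (IntermediateField.inclusion hML).toLinearMap
      (IntermediateField.inclusion hML).injective
  letI : Algebra ↥K ↥(K ⊔ K') := (incl h).toAlgebra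
  letI : Algebra ↥K ↥(H ⊓ (K ⊔ K')) := (incl hKM).toAlgebra
  letI : Algebra ↥(H ⊓ (K ⊔ K')) ↥(K ⊔ K') := (incl hML).toAlgebra
  haveI : IsScalarTower ℚ ↥K ↥(K ⊔ K') :=
    IsScalarTower.of_algebraMap_eq' (Subsingleton.elim _ _)
  haveI : IsScalarTower ℚ ↥K ↥(H ⊓ (K ⊔ K')) :=
    IsScalarTower.of_algebraMap_eq' (Subsingleton.elim _ _)
  haveI : IsScalarTower ℚ ↥(H ⊓ (K ⊔ K')) ↥(K ⊔ K') :=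
    IsScalarTower.of_algebraMap_eq' (Subsingleton.elim _ _)
  haveI : IsScalarTower ↥K ↥(H ⊓ (K ⊔ K')) ↥(K ⊔ K') :=
    IsScalarTower.of_algebraMap_eq' (RingHom.ext fun x => rfl)
  haveI : FiniteDimensional ↥K ↥(K ⊔ K') := FiniteDimensional.right ℚ _ _
  haveI : FiniteDimensional ↥K ↥(H ⊓ (K ⊔ K')) := FiniteDimensional.right ℚ _ _
  haveI : FiniteDimensional ↥(H ⊓ (K ⊔ K')) ↥(K ⊔ K') := FiniteDimensional.right ℚ _ _
  have hdvd1 : finrank ℚ ↥(K ⊔ K') ∣ finrank ℚ ↥K * finrank ℚ ↥K' :=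
    finrank_sup_dvd K K' hgal hgal'
  have hrank1 : finrank ℚ ↥K * finrank ↥K ↥(K ⊔ K') = finrank ℚ ↥(K ⊔ K') :=
    finrank_mul_finrank ℚ ↥K ↥(K ⊔ K')
  have hd : finrank ↥K ↥(K ⊔ K') ∣ finrank ℚ ↥K' := by
    have hp0 : 0 < finrank ℚ ↥K := finrank_pos
    rw [← hrank1] at hdvd1
    exact (mul_dvd_mul_iff_left (by omega : finrank ℚ ↥K ≠ 0)).mp hdvd1
  have hm : finrank ↥K ↥(H ⊓ (K ⊔ K')) * finrank ↥(H ⊓ (K ⊔ K')) ↥(K ⊔ K')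
      = finrank ↥K ↥(K ⊔ K') := finrank_mul_finrank ↥K ↥(H ⊓ (K ⊔ K')) ↥(K ⊔ K')
  have hMdvd : finrank ↥K ↥(H ⊓ (K ⊔ K')) ∣ finrank ℚ ↥K' :=
    dvd_trans ⟨_, hm.symm⟩ hd
  rcases hq.eq_one_or_self_of_dvd _ hMdvd with h1 | hqq
  · have heq : finrank ℚ ↥(H ⊓ (K ⊔ K')) = finrank ℚ ↥K := by
      rw [← finrank_mul_finrank ℚ ↥K ↥(H ⊓ (K ⊔ K')), h1, mul_one]
    exact (IntermediateField.eq_of_le_of_finrank_le hKM (le_of_eq heq)).symm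
  · exfalso
    have hx : finrank ↥(H ⊓ (K ⊔ K')) ↥(K ⊔ K') = 1 := by
      have hqpos := hq.pos
      have hxpos : 0 < finrank ↥(H ⊓ (K ⊔ K')) ↥(K ⊔ K') := finrank_pos
      have h' := hd
      rw [← hm, hqq] at h'
      have hle' : finrank ℚ ↥K' * finrank ↥(H ⊓ (K ⊔ K')) ↥(K ⊔ K') ≤ finrank ℚ ↥K' * 1 := by
        rw [mul_one]; exact Nat.le_of_dvd hqpos h'
      have := Nat.le_of_mul_le_mul_left hle' hqpos
      omega
    have hMeq : H ⊓ (K ⊔ K') = K ⊔ K' := by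
      apply IntermediateField.eq_of_le_of_finrank_le hML
      rw [← finrank_mul_finrank ℚ ↥(H ⊓ (K ⊔ K')) ↥(K ⊔ K'), hx, mul_one]
    have hLH : K ⊔ K' ≤ H := inf_eq_right.mp hMeq
    exact hram ⟨descend_finite h hLH huH.1, descend_infinite h hLH huH.2⟩

end AuxiliaryLemmas

/-- Let `K₁`, `K₂` be distinct Galois number fields of odd prime degrees
whose Hilbert class fields are abelian over ℚ. If the compositum `K₁K₂` is ramified over
`Kᵢ`, then `H(Kᵢ) ∩ K₁K₂ = Kᵢ`. -/
theorem statement10 (K₁ K₂ : IntermediateField ℚ Qbar)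
    [NumberField ↥K₁] [NumberField ↥K₂]
    (hne : K₁ ≠ K₂)
    (hgal₁ : IsGalois ℚ ↥K₁) (hgal₂ : IsGalois ℚ ↥K₂)
    (hdeg₁ : (finrank ℚ ↥K₁).Prime) (hodd₁ : Odd (finrank ℚ ↥K₁))
    (hdeg₂ : (finrank ℚ ↥K₂).Prime) (hodd₂ : Odd (finrank ℚ ↥K₂))
    (H₁ H₂ : IntermediateField ℚ Qbar)
    (hH₁ : IsHilbertClassField K₁ H₁) (hH₂ : IsHilbertClassField K₂ H₂)
    (hab₁ : IsAbelianOverRat H₁) (hab₂ : IsAbelianOverRat H₂) :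
    (IsRamifiedExt (le_sup_left : K₁ ≤ K₁ ⊔ K₂) → H₁ ⊓ (K₁ ⊔ K₂) = K₁) ∧
    (IsRamifiedExt (le_sup_right : K₂ ≤ K₁ ⊔ K₂) → H₂ ⊓ (K₁ ⊔ K₂) = K₂) := by
  constructor
  · intro hram
    exact key_lemma K₁ K₂ H₁ hgal₁ hgal₂ hdeg₂ hH₁ (K₁ ⊔ K₂) rfl le_sup_left hram
  · intro hram
    exact key_lemma K₂ K₁ H₂ hgal₂ hgal₁ hdeg₁ hH₂ (K₁ ⊔ K₂) (sup_comm K₁ K₂) le_sup_right hram
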